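/- Let B be a C*-algebra and A a closed *-subalgebra satisfying the ideal intersection property and axiom (inv). Then for every regular ideal J of B, the ideal J ∩ A is a regular ideal of A, i.e. Ann_A(Ann_A(J ∩ A)) = J ∩ A. -/

import Mathlib

open Pointwise

variable {B : Type*} [NonUnitalCStarAlgebra B]

/-- Closed linear span of a subset of `B`. -/
def clSpan (S : Set B) : Set B := closure (Submodule.span ℂ S : Set B)

/-- `S` is `B`-invariant if `[SB] = [BS]`. -/
def BInvariant (S : Set B) : Prop :=
  clSpan (S * (Set.univ : Set B)) = clSpan ((Set.univ : Set B) * S)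

/-- The closed two-sided ideal of `B` generated by `S`, namely `[BSB]`. -/
def idealGen (S : Set B) : Set B :=
  clSpan ((Set.univ : Set B) * S * (Set.univ : Set B))

/-- Two-sided annihilator of `S` computed in `B`. -/
def annB (S : Set B) : Set B := {x | ∀ s ∈ S, x * s = 0 ∧ s * x = 0}

/-- Two-sided annihilator of `S` computed inside the subset `A ⊆ B`. -/
def annIn (A S : Set B) : Set B := {x ∈ A | ∀ s ∈ S, x * s = 0 ∧ s * x = 0}

/-- A closed *-subalgebra of `B`, regarded as a subset. -/
structure ClosedStarSubalgebra (A : Set B) : Prop where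
  isClosed : IsClosed A
  zero_mem : (0 : B) ∈ A
  add_mem : ∀ ⦃x y : B⦄, x ∈ A → y ∈ A → x + y ∈ A
  smul_mem : ∀ (c : ℂ) ⦃x : B⦄, x ∈ A → c • x ∈ A
  mul_mem : ∀ ⦃x y : B⦄, x ∈ A → y ∈ A → x * y ∈ A
  star_mem : ∀ ⦃x : B⦄, x ∈ A → star x ∈ A

/-- A norm-closed two-sided ideal of `B`. -/
structure ClosedTwoSidedIdeal (J : Set B) : Prop where
  isClosed : IsClosed J
  zero_mem : (0 : B) ∈ J
  add_mem : ∀ ⦃x y : B⦄, x ∈ J → y ∈ J → x + y ∈ J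
  smul_mem : ∀ (c : ℂ) ⦃x : B⦄, x ∈ J → c • x ∈ J
  mul_mem_left : ∀ (a : B) ⦃x : B⦄, x ∈ J → a * x ∈ J
  mul_mem_right : ∀ (a : B) ⦃x : B⦄, x ∈ J → x * a ∈ J

/-- A norm-closed two-sided ideal of the subalgebra `A ⊆ B`. -/
structure IdealOf (A J : Set B) : Prop where
  subset : J ⊆ A
  isClosed : IsClosed J
  zero_mem : (0 : B) ∈ J
  add_mem : ∀ ⦃x y : B⦄, x ∈ J → y ∈ J → x + y ∈ J
  smul_mem : ∀ (c : ℂ) ⦃x : B⦄, x ∈ J → c • x ∈ J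
  mul_mem_left : ∀ ⦃a : B⦄, a ∈ A → ∀ ⦃x : B⦄, x ∈ J → a * x ∈ J
  mul_mem_right : ∀ ⦃a : B⦄, a ∈ A → ∀ ⦃x : B⦄, x ∈ J → x * a ∈ J

/-- The ideal intersection property: every nonzero closed two-sided ideal of `B`
meets `A` nontrivially. -/
def IdealIntersectionProperty (A : Set B) : Prop :=
  ∀ J : Set B, ClosedTwoSidedIdeal J → J ≠ {0} → J ∩ A ≠ {0}

/-- Axiom (inv): `J ∩ A` is `B`-invariant for every closed two-sided ideal `J` of `B`. -/
def AxiomInv (A : Set B) : Prop :=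
  ∀ J : Set B, ClosedTwoSidedIdeal J → BInvariant (J ∩ A)

/-- A regular ideal of `B`. -/
def RegularIdealB (J : Set B) : Prop :=
  ClosedTwoSidedIdeal J ∧ annB (annB J) = J

/-- A regular ideal of the subalgebra `A`. -/
def RegularIdealIn (A I : Set B) : Prop :=
  IdealOf A I ∧ annIn A (annIn A I) = I

/-- A normalizer of `A` in `B`. -/
def IsNormalizer (A : Set B) (n : B) : Prop :=
  (∀ a ∈ A, star n * a * n ∈ A) ∧ (∀ a ∈ A, n * a * star n ∈ A)

/-- `A` contains an approximate unit for `B`. -/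
def ContainsApproxUnit (A : Set B) : Prop :=
  ∃ (ι : Type) (l : Filter ι) (e : ι → B), l.NeBot ∧ (∀ i, e i ∈ A) ∧
    ∀ b : B, Filter.Tendsto (fun i => e i * b) l (nhds b) ∧
      Filter.Tendsto (fun i => b * e i) l (nhds b)

/-- `A` is a regular subalgebra of `B`: the normalizers span a dense subspace of
`B` and `A` contains an approximate unit for `B`. -/
def RegularSubalgebra (A : Set B) : Prop :=
  ClosedStarSubalgebra A ∧ clSpan {n : B | IsNormalizer A n} = Set.univ ∧
    ContainsApproxUnit A

section AuxLemmas

variable {B : Type*} [NonUnitalCStarAlgebra B]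

/-- annihilation on the left extends to closed spans -/
lemma aux_left_ann {x : B} {S : Set B} (h : ∀ s ∈ S, x * s = 0) :
    ∀ y ∈ clSpan S, x * y = 0 := by
  intro y hy
  let f : B →L[ℂ] B := ContinuousLinearMap.mul ℂ B x
  have hker : Submodule.span ℂ S ≤ LinearMap.ker (f : B →ₗ[ℂ] B) :=
    Submodule.span_le.mpr fun s hs => by simpa [f] using h s hs
  have hcl : IsClosed (LinearMap.ker (f : B →ₗ[ℂ] B) : Set B) :=
    isClosed_eq f.continuous continuous_const
  have := closure_minimal (Set.Subset.trans hker (le_refl _)) hcl hy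
  simpa [f] using this

lemma aux_right_ann {x : B} {S : Set B} (h : ∀ s ∈ S, s * x = 0) :
    ∀ y ∈ clSpan S, y * x = 0 := by
  intro y hy
  let f : B →L[ℂ] B := (ContinuousLinearMap.mul ℂ B).flip x
  have hker : Submodule.span ℂ S ≤ LinearMap.ker (f : B →ₗ[ℂ] B) :=
    Submodule.span_le.mpr fun s hs => by simpa [f] using h s hs
  have hcl : IsClosed (LinearMap.ker (f : B →ₗ[ℂ] B) : Set B) :=
    isClosed_eq f.continuous continuous_const
  have := closure_minimal (Set.Subset.trans hker (le_refl _)) hcl hy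
  simpa [f] using this

/-- `clSpan (S * univ)` is stable under right multiplication. -/
lemma aux_clSpan_mul_right {S : Set B} {y : B} (hy : y ∈ clSpan (S * (Set.univ : Set B)))
    (b : B) : y * b ∈ clSpan (S * (Set.univ : Set B)) := by
  let f : B →L[ℂ] B := (ContinuousLinearMap.mul ℂ B).flip b
  have hmap : Set.MapsTo f (Submodule.span ℂ (S * (Set.univ : Set B)) : Set B)
      (Submodule.span ℂ (S * (Set.univ : Set B)) : Set B) := by
    intro z hz
    have : Submodule.map (f : B →ₗ[ℂ] B) (Submodule.span ℂ (S * (Set.univ : Set B))) ≤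
        Submodule.span ℂ (S * (Set.univ : Set B)) := by
      rw [Submodule.map_span_le]
      rintro m ⟨s, hs, c, -, rfl⟩
      show s * c * b ∈ _
      rw [mul_assoc]
      exact Submodule.subset_span (Set.mul_mem_mul hs (Set.mem_univ _))
    exact this ⟨z, hz, rfl⟩
  have := map_mem_closure f.continuous hy hmap
  simpa [f, clSpan] using this

lemma aux_clSpan_mul_left {S : Set B} {y : B} (hy : y ∈ clSpan ((Set.univ : Set B) * S))
    (b : B) : b * y ∈ clSpan ((Set.univ : Set B) * S) := by
  let f : B →L[ℂ] B := ContinuousLinearMap.mul ℂ B b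
  have hmap : Set.MapsTo f (Submodule.span ℂ ((Set.univ : Set B) * S) : Set B)
      (Submodule.span ℂ ((Set.univ : Set B) * S) : Set B) := by
    intro z hz
    have : Submodule.map (f : B →ₗ[ℂ] B) (Submodule.span ℂ ((Set.univ : Set B) * S)) ≤
        Submodule.span ℂ ((Set.univ : Set B) * S) := by
      rw [Submodule.map_span_le]
      rintro m ⟨c, -, s, hs, rfl⟩
      show b * (c * s) ∈ _
      rw [← mul_assoc]
      exact Submodule.subset_span (Set.mul_mem_mul (Set.mem_univ _) hs)
    exact this ⟨z, hz, rfl⟩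
  have := map_mem_closure f.continuous hy hmap
  simpa [f, clSpan] using this

/-- Every selfadjoint element lies in the closure of `b * B`. -/
lemma aux_sa_mem_closure {b : B} (hb : IsSelfAdjoint b) :
    b ∈ closure ({b} * (Set.univ : Set B)) := by
  rw [Metric.mem_closure_iff]
  intro ε hε
  set δ : ℝ := ε / 2 with hδdef
  have hδ : 0 < δ := by positivity
  set g : ℝ → ℝ := fun t => min (|t| / δ) 1 with hgdef
  have hg : Continuous g := (continuous_abs.div_const δ).min continuous_const
  have hg0 : g 0 = 0 := by simp [g]
  refine ⟨b * cfcₙ g b, Set.mul_mem_mul rfl (Set.mem_univ _), ?_⟩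
  have h1 : cfcₙ (fun t : ℝ => t * g t) b = b * cfcₙ g b := by
    rw [cfcₙ_mul (fun t : ℝ => t) g b continuous_id.continuousOn rfl
      hg.continuousOn hg0, cfcₙ_id' ℝ b]
  have h2 : cfcₙ (fun t : ℝ => t - t * g t) b = b - cfcₙ (fun t : ℝ => t * g t) b := by
    rw [cfcₙ_sub (fun t : ℝ => t) (fun t : ℝ => t * g t) b continuous_id.continuousOn rfl
      (continuous_id.mul hg).continuousOn (zero_mul _), cfcₙ_id' ℝ b]
  have h3 : ‖cfcₙ (fun t : ℝ => t - t * g t) b‖ ≤ δ := by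
    apply norm_cfcₙ_le
    intro t _
    rcases le_or_gt δ |t| with ht | ht
    · have hgt : g t = 1 := min_eq_right ((one_le_div hδ).mpr ht)
      simp [hgt, hδ.le]
    · have hm0 : 0 ≤ g t := le_min (by positivity) zero_le_one
      have hm1 : g t ≤ 1 := min_le_right _ _
      have heq : t - t * g t = t * (1 - g t) := by ring
      rw [heq, Real.norm_eq_abs, abs_mul]
      calc |t| * |1 - g t| ≤ |t| * 1 := by
            gcongr
            rw [abs_le]; constructor <;> linarith
        _ ≤ δ := by rw [mul_one]; exact ht.le
  rw [dist_eq_norm, ← h1, ← h2]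
  calc ‖cfcₙ (fun t : ℝ => t - t * g t) b‖ ≤ δ := h3
    _ < ε := by rw [hδdef]; linarith

/-- The annihilator of a subset is closed. -/
lemma aux_isClosed_annB (S : Set B) : IsClosed (annB S) := by
  have : annB S = ⋂ s ∈ S, ({x : B | x * s = 0} ∩ {x : B | s * x = 0}) := by
    ext x
    simp only [annB, Set.mem_setOf_eq, Set.mem_iInter, Set.mem_inter_iff]
  rw [this]
  refine isClosed_biInter fun s _ => IsClosed.inter ?_ ?_
  · exact isClosed_eq (continuous_mul_right s) continuous_const
  · exact isClosed_eq (continuous_mul_left s) continuous_const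

/-- The annihilator of a closed two-sided ideal is a closed two-sided ideal. -/
lemma aux_annB_ideal {J : Set B} (hJ : ClosedTwoSidedIdeal J) :
    ClosedTwoSidedIdeal (annB J) where
  isClosed := aux_isClosed_annB J
  zero_mem := fun s _ => ⟨zero_mul s, mul_zero s⟩
  add_mem := fun x y hx hy s hs => by
    obtain ⟨hx1, hx2⟩ := hx s hs
    obtain ⟨hy1, hy2⟩ := hy s hs
    constructor
    · rw [add_mul, hx1, hy1, add_zero]
    · rw [mul_add, hx2, hy2, add_zero]
  smul_mem := fun c x hx s hs => by
    obtain ⟨hx1, hx2⟩ := hx s hs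
    constructor
    · rw [smul_mul_assoc, hx1, smul_zero]
    · rw [mul_smul_comm, hx2, smul_zero]
  mul_mem_left := fun a x hx s hs => by
    constructor
    · rw [mul_assoc, (hx s hs).1, mul_zero]
    · rw [← mul_assoc]
      exact (hx (s * a) (hJ.mul_mem_right a hs)).2
  mul_mem_right := fun a x hx s hs => by
    constructor
    · rw [mul_assoc]
      exact (hx (a * s) (hJ.mul_mem_left a hs)).1
    · rw [← mul_assoc, (hx s hs).2, zero_mul]

/-- Core lemma: under IIP and (inv), anything annihilating `L ∩ A` annihilates `L`. -/
lemma aux_core (A : Set B) (hA : ClosedStarSubalgebra A)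
    (hiip : IdealIntersectionProperty A) (hinv : AxiomInv A)
    {L : Set B} (hL : ClosedTwoSidedIdeal L)
    {x : B} (hx : ∀ a ∈ L ∩ A, x * a = 0 ∧ a * x = 0) :
    ∀ l ∈ L, x * l = 0 ∧ l * x = 0 := by
  classical
  set M : Set B := clSpan ((L ∩ A) * (Set.univ : Set B)) with hMdef
  have hM' : M = clSpan ((Set.univ : Set B) * (L ∩ A)) := hinv L hL
  -- x annihilates M
  have hxM : ∀ m ∈ M, x * m = 0 := by
    apply aux_left_ann
    rintro s ⟨a, ha, c, -, rfl⟩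
    rw [← mul_assoc, (hx a ha).1, zero_mul]
  have hMx : ∀ m ∈ M, m * x = 0 := by
    rw [hM']
    apply aux_right_ann
    rintro s ⟨c, -, a, ha, rfl⟩
    rw [mul_assoc, (hx a ha).2, mul_zero]
  -- M is stable under multiplication
  have hMr : ∀ m ∈ M, ∀ b : B, m * b ∈ M := fun m hm b => aux_clSpan_mul_right hm b
  have hMl : ∀ m ∈ M, ∀ b : B, b * m ∈ M := by
    intro m hm b
    rw [hM'] at hm ⊢
    exact aux_clSpan_mul_left hm b
  -- D = L ∩ annB M  is a closed two-sided ideal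
  set D : Set B := L ∩ annB M with hDdef
  have hD : ClosedTwoSidedIdeal D := {
    isClosed := hL.isClosed.inter (aux_isClosed_annB M)
    zero_mem := ⟨hL.zero_mem, fun s _ => ⟨zero_mul s, mul_zero s⟩⟩
    add_mem := fun y z hy hz => by
      refine ⟨hL.add_mem hy.1 hz.1, fun s hs => ?_⟩
      obtain ⟨h1, h2⟩ := hy.2 s hs
      obtain ⟨h3, h4⟩ := hz.2 s hs
      exact ⟨by rw [add_mul, h1, h3, add_zero], by rw [mul_add, h2, h4, add_zero]⟩
    smul_mem := fun c y hy => by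
      refine ⟨hL.smul_mem c hy.1, fun s hs => ?_⟩
      obtain ⟨h1, h2⟩ := hy.2 s hs
      exact ⟨by rw [smul_mul_assoc, h1, smul_zero], by rw [mul_smul_comm, h2, smul_zero]⟩
    mul_mem_left := fun a y hy => by
      refine ⟨hL.mul_mem_left a hy.1, fun s hs => ?_⟩
      constructor
      · rw [mul_assoc, (hy.2 s hs).1, mul_zero]
      · rw [← mul_assoc]
        exact (hy.2 _ (hMr s hs a)).2
    mul_mem_right := fun a y hy => by
      refine ⟨hL.mul_mem_right a hy.1, fun s hs => ?_⟩
      constructor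
      · rw [mul_assoc]
        exact (hy.2 _ (hMl s hs a)).1
      · rw [← mul_assoc, (hy.2 s hs).2, zero_mul] }
  -- D ∩ A = {0}
  have hDA : D ∩ A = {0} := by
    apply Set.eq_singleton_iff_unique_mem.mpr
    constructor
    · exact ⟨hD.zero_mem, hA.zero_mem⟩
    · rintro a ⟨⟨haL, haM⟩, haA⟩
      set b : B := star a * a with hbdef
      have hbA : b ∈ A := hA.mul_mem (hA.star_mem haA) haA
      have hbL : b ∈ L := hL.mul_mem_left (star a) haL
      have hbsa : IsSelfAdjoint b := IsSelfAdjoint.star_mul_self a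
      have hbM : b ∈ M := by
        have hsub : ({b} : Set B) * (Set.univ : Set B) ⊆
            (Submodule.span ℂ ((L ∩ A) * (Set.univ : Set B)) : Set B) := by
          rintro s ⟨b', hb', c, -, rfl⟩
          rcases Set.mem_singleton_iff.mp hb' with rfl
          exact Submodule.subset_span (Set.mul_mem_mul ⟨hbL, hbA⟩ (Set.mem_univ _))
        exact closure_mono hsub (aux_sa_mem_closure hbsa)
      have hbb : b * b = 0 := by
        conv_lhs => rw [hbdef]
        rw [mul_assoc, (haM b hbM).1, mul_zero]
      have hb0 : b = 0 := by
        have hb : ‖b‖ * ‖b‖ = 0 := by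
          rw [← CStarRing.norm_star_mul_self (x := b), hbsa.star_eq, hbb, norm_zero]
        have := mul_self_eq_zero.mp hb
        simpa using norm_eq_zero.mp this
      have : ‖a‖ * ‖a‖ = 0 := by
        rw [← CStarRing.norm_star_mul_self (x := a), ← hbdef, hb0, norm_zero]
      simpa using norm_eq_zero.mp (mul_self_eq_zero.mp this)
  -- so D = {0}
  have hD0 : D = {0} := by
    by_contra h
    exact (hiip D hD h) hDA
  -- conclude
  intro l hl
  constructor
  · have : x * l ∈ D := by
      refine ⟨hL.mul_mem_left x hl, fun m hm => ?_⟩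
      constructor
      · rw [mul_assoc]
        exact hxM _ (hMl m hm l)
      · rw [← mul_assoc, hMx m hm, zero_mul]
    rw [hD0] at this
    exact this
  · have : l * x ∈ D := by
      refine ⟨hL.mul_mem_right x hl, fun m hm => ?_⟩
      constructor
      · rw [mul_assoc, hxM m hm, mul_zero]
      · rw [← mul_assoc]
        exact hMx _ (hMr m hm l)
    rw [hD0] at this
    exact this

end AuxLemmas

/-- Under the ideal intersection property and axiom (inv), `J ∩ A` is a regular
ideal of `A` for every regular ideal `J` of `B`. -/

theorem stmt12 (A : Set B) (hA : ClosedStarSubalgebra A)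
    (hiip : IdealIntersectionProperty A) (hinv : AxiomInv A) :
    ∀ J : Set B, RegularIdealB J →
      annIn A (annIn A (J ∩ A)) = J ∩ A := by
  rintro J ⟨hJ, hreg⟩
  apply subset_antisymm
  · rintro x ⟨hxA, hxann⟩
    have hK : ClosedTwoSidedIdeal (annB J) := aux_annB_ideal hJ
    have hxKA : ∀ a ∈ annB J ∩ A, x * a = 0 ∧ a * x = 0 := by
      rintro a ⟨haK, haA⟩
      exact hxann a ⟨haA, fun s hs => haK s hs.1⟩
    have hxK := aux_core A hA hiip hinv hK hxKA
    have hxJ : x ∈ annB (annB J) := fun k hk => hxK k hk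
    rw [hreg] at hxJ
    exact ⟨hxJ, hxA⟩
  · rintro x ⟨hxJ, hxA⟩
    refine ⟨hxA, fun s hs => ?_⟩
    obtain ⟨h1, h2⟩ := hs.2 x ⟨hxJ, hxA⟩
    exact ⟨h2, h1⟩
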